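/- arXiv:2101.06550 — 2 statements merged into one kernel-verified Lean document; each statement's English description precedes it below -/
import Mathlib

section
/- Energy decay in the droplet model: with the Lagrange multiplier λ = ū, the free energy F = Σᵢ (1/2)Rᵢ² - λ(Σᵢ (1/3)Rᵢ³ - V₀/(4π)) satisfies dF/dt = -Σᵢ (H(Rᵢ)/Rᵢ)(1 - ū Rᵢ)² ≤ 0 along solutions of dRᵢ/dt = H(Rᵢ)(-1/Rᵢ² + ū/Rᵢ). -/
noncomputable def Hside (r : ℝ) : ℝ := if 0 < r then 1 else 0

theorem droplet_energy_decay (N : ℕ) (R : Fin N → ℝ → ℝ) (V₀ t : ℝ)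
    (ubar : ℝ → ℝ)
    (hubar : ∀ τ, ubar τ = (∑ j, Hside (R j τ)) / (∑ j, Hside (R j τ) * R j τ))
    (hpos : ∀ i τ, 0 < R i τ)
    (hvol : ∀ τ, ∑ i, (4 * Real.pi / 3) * (R i τ) ^ 3 = V₀)
    (hode : ∀ i, HasDerivAt (R i)
      (Hside (R i t) * (-(1 / (R i t) ^ 2) + ubar t / (R i t))) t)
    (u' : ℝ) (hu : HasDerivAt ubar u' t) :
    HasDerivAt
      (fun τ => (∑ i, (1/2) * (R i τ) ^ 2) -
        ubar τ * ((∑ i, (1/3) * (R i τ) ^ 3) - V₀ / (4 * Real.pi)))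
      (-∑ i, (Hside (R i t) / R i t) * (1 - ubar t * R i t) ^ 2) t ∧
    (-∑ i, (Hside (R i t) / R i t) * (1 - ubar t * R i t) ^ 2) ≤ 0 := by
  have hH : ∀ i τ, Hside (R i τ) = 1 := fun i τ => if_pos (hpos i τ)
  have hne : ∀ i τ, R i τ ≠ 0 := fun i τ => (hpos i τ).ne'
  set u := ubar t with hu_def
  have hzero : ∀ τ, (∑ i, (1/3 : ℝ) * (R i τ) ^ 3) - V₀ / (4 * Real.pi) = 0 := by
    intro τ
    have hπ : (4 * Real.pi) ≠ 0 := by positivity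
    have hv : (4 * Real.pi) * ∑ i, (1/3 : ℝ) * (R i τ) ^ 3 = V₀ := by
      rw [Finset.mul_sum, ← hvol τ]
      exact Finset.sum_congr rfl fun i _ => by ring
    rw [sub_eq_zero, eq_div_iff hπ, mul_comm, hv]
  -- key algebraic fact: N * u = u^2 * S where S = ∑ R i t
  have hkey : (N : ℝ) * u = u ^ 2 * ∑ i, R i t := by
    rcases eq_or_ne N 0 with hN | hN
    · subst hN; simp
    · have hSpos : 0 < ∑ i, R i t := by
        apply Finset.sum_pos (fun i _ => hpos i t)
        simpa [Finset.univ_nonempty_iff] using Fin.pos_iff_nonempty.mp (Nat.pos_of_ne_zero hN)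
      have hS : (∑ i, R i t) ≠ 0 := hSpos.ne'
      have hu_eq : u = (N : ℝ) / ∑ i, R i t := by
        rw [hu_def, hubar t]
        simp [hH, Finset.sum_const, Finset.card_univ]
      rw [hu_eq]
      field_simp
  constructor
  · have hfun : (fun τ => (∑ i, (1/2 : ℝ) * (R i τ) ^ 2) -
        ubar τ * ((∑ i, (1/3 : ℝ) * (R i τ) ^ 3) - V₀ / (4 * Real.pi)))
        = fun τ => ∑ i, (1/2 : ℝ) * (R i τ) ^ 2 := by
      funext τ; rw [hzero τ, mul_zero, sub_zero]
    rw [hfun]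
    have hd : HasDerivAt (fun τ => ∑ i, (1/2 : ℝ) * (R i τ) ^ 2)
        (∑ i, (1/2 : ℝ) * ((2 : ℕ) * R i t ^ (2 - 1) *
          (Hside (R i t) * (-(1 / (R i t) ^ 2) + u / (R i t))))) t :=
      HasDerivAt.fun_sum fun i _ => ((hode i).pow 2).const_mul (1/2 : ℝ)
    convert hd using 1
    have e1 : (∑ i, (1/2 : ℝ) * ((2 : ℕ) * R i t ^ (2 - 1) *
        (Hside (R i t) * (-(1 / (R i t) ^ 2) + u / (R i t)))))
        = ∑ i, (u - 1 / R i t) := by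
      refine Finset.sum_congr rfl fun i _ => ?_
      rw [hH]
      have := hne i t
      field_simp
      ring
    have e2 : (∑ i, (Hside (R i t) / R i t) * (1 - u * R i t) ^ 2)
        = ∑ i, (1 / R i t - 2 * u + u ^ 2 * R i t) := by
      refine Finset.sum_congr rfl fun i _ => ?_
      rw [hH]
      have := hne i t
      field_simp
      ring
    rw [e1, e2]
    simp only [Finset.sum_add_distrib, Finset.sum_sub_distrib, ← Finset.mul_sum,
      Finset.sum_const, Finset.card_univ, Fintype.card_fin, nsmul_eq_mul]
    linarith [hkey]
  · apply neg_nonpos_of_nonneg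
    apply Finset.sum_nonneg
    intro i _
    rw [hH]
    have := hpos i t
    positivity
end

section
/- The droplet dynamics are a gradient flow: with λ = ū, the partial derivative ∂F/∂Rᵢ of F = Σⱼ (1/2)Rⱼ² - λ Σⱼ (1/3)Rⱼ³ + const equals Rᵢ - ū Rᵢ², and hence dRᵢ/dt = -m(Rᵢ) ∂F/∂Rᵢ with mobility m(Rᵢ) = H(Rᵢ)/Rᵢ³, so that dF/dt = -Σᵢ m(Rᵢ)(∂F/∂Rᵢ)² ≤ 0. -/
noncomputable def mob (r : ℝ) : ℝ := Hside r / r ^ 3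

lemma ode_rw (r ubar : ℝ) (hr : 0 < r) :
    Hside r * (-(1 / r ^ 2) + ubar / r) = -(mob r) * (r - ubar * r ^ 2) := by
  simp only [Hside, mob, if_pos hr]
  field_simp
  ring

theorem droplet_gradient_flow (N : ℕ) (ubar c : ℝ) (R : Fin N → ℝ → ℝ) (t : ℝ)
    (hpos : ∀ i, 0 < R i t)
    (hode : ∀ i, HasDerivAt (R i)
      (Hside (R i t) * (-(1 / (R i t) ^ 2) + ubar / (R i t))) t) :
    (∀ (x : Fin N → ℝ) (i : Fin N),
      HasDerivAt
        (fun s => (∑ j, ((1/2) * (Function.update x i s j) ^ 2 -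
          ubar * (1/3) * (Function.update x i s j) ^ 3)) + c)
        (x i - ubar * (x i) ^ 2) (x i)) ∧
    (∀ i, HasDerivAt (R i) (-(mob (R i t)) * (R i t - ubar * (R i t) ^ 2)) t) ∧
    HasDerivAt
      (fun τ => (∑ j, ((1/2) * (R j τ) ^ 2 - ubar * (1/3) * (R j τ) ^ 3)) + c)
      (-∑ i, mob (R i t) * (R i t - ubar * (R i t) ^ 2) ^ 2) t ∧
    (-∑ i, mob (R i t) * (R i t - ubar * (R i t) ^ 2) ^ 2) ≤ 0 := by
  have hmob : ∀ i, 0 ≤ mob (R i t) := by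
    intro i
    have := hpos i
    simp only [mob, Hside, if_pos this]
    positivity
  refine ⟨?_, ?_, ?_, ?_⟩
  · intro x i
    have heq : (fun s => (∑ j, ((1/2) * (Function.update x i s j) ^ 2 -
          ubar * (1/3) * (Function.update x i s j) ^ 3)) + c)
        = fun s => ((1/2) * s ^ 2 - ubar * (1/3) * s ^ 3) +
          ((∑ j ∈ Finset.univ.erase i, ((1/2) * (x j) ^ 2 - ubar * (1/3) * (x j) ^ 3)) + c) := by
      funext s
      rw [← Finset.add_sum_erase _ _ (Finset.mem_univ i), Function.update_self]
      have : ∀ j ∈ Finset.univ.erase i,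
          (1/2) * (Function.update x i s j) ^ 2 - ubar * (1/3) * (Function.update x i s j) ^ 3
          = (1/2) * (x j) ^ 2 - ubar * (1/3) * (x j) ^ 3 := by
        intro j hj
        rw [Function.update_of_ne (Finset.ne_of_mem_erase hj)]
      rw [Finset.sum_congr rfl this]
      ring
    rw [heq]
    have h1 : HasDerivAt (fun s : ℝ => (1/2) * s ^ 2 - ubar * (1/3) * s ^ 3)
        (x i - ubar * (x i) ^ 2) (x i) := by
      have h2 : HasDerivAt (fun s : ℝ => (1/2) * s ^ 2 - ubar * (1/3) * s ^ 3)
          ((1/2) * (2 * (x i) ^ 1) - ubar * (1/3) * (3 * (x i) ^ 2)) (x i) :=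
        ((hasDerivAt_pow 2 (x i)).const_mul _).sub ((hasDerivAt_pow 3 (x i)).const_mul _)
      convert h2 using 1; ring
    exact h1.add_const _
  · intro i
    have := hode i
    rwa [ode_rw _ _ (hpos i)] at this
  · have hterm : ∀ i : Fin N, HasDerivAt (fun τ => (1/2) * (R i τ) ^ 2 - ubar * (1/3) * (R i τ) ^ 3)
        (-(mob (R i t) * (R i t - ubar * (R i t) ^ 2) ^ 2)) t := by
      intro i
      have hR : HasDerivAt (R i) (-(mob (R i t)) * (R i t - ubar * (R i t) ^ 2)) t := by
        have := hode i
        rwa [ode_rw _ _ (hpos i)] at this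
      have h2 : HasDerivAt (fun τ => (1/2) * (R i τ) ^ 2 - ubar * (1/3) * (R i τ) ^ 3)
          ((1/2) * (2 * (R i t) ^ 1 * (-(mob (R i t)) * (R i t - ubar * (R i t) ^ 2)))
          - ubar * (1/3) * (3 * (R i t) ^ 2 * (-(mob (R i t)) * (R i t - ubar * (R i t) ^ 2)))) t :=
        ((hR.pow 2).const_mul _).sub ((hR.pow 3).const_mul _)
      convert h2 using 1; ring
    have hsum : HasDerivAt (fun τ => ∑ j, ((1/2) * (R j τ) ^ 2 - ubar * (1/3) * (R j τ) ^ 3)) (∑ i, -(mob (R i t) * (R i t - ubar * (R i t) ^ 2) ^ 2)) t := HasDerivAt.fun_sum (fun i _ => hterm i)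
    have := hsum.add_const c
    simpa [Finset.sum_neg_distrib] using this
  · rw [neg_nonpos]
    exact Finset.sum_nonneg fun i _ => mul_nonneg (hmob i) (sq_nonneg _)
end
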